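/- Let v be monotone submodular with v(∅)=0 and let p be a pure Nash equilibrium of the pricing game with S = X(p). Then for every i ∉ S, v(S ∪ {i}) - v(S) = 0; consequently v(S) = v(N). -/

import Mathlib

/-- For monotone submodular `v` with `v ∅ = 0` and a pure Nash
equilibrium `p` with `S = X p`: every `i ∉ S` has zero marginal value with
respect to `S`, hence `v S = v N`. -/
theorem stmt7 {n : ℕ} (v : Finset (Fin n) → ℝ)
    (hmono : ∀ S T : Finset (Fin n), S ⊆ T → v S ≤ v T)
    (hsub : ∀ S T : Finset (Fin n), v (S ∪ T) + v (S ∩ T) ≤ v S + v T)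
    (hv0 : v ∅ = 0)
    (X : (Fin n → ℝ) → Finset (Fin n))
    (hXd : ∀ q : Fin n → ℝ, (∀ i, 0 ≤ q i) → ∀ T : Finset (Fin n),
      v T - ∑ i ∈ T, q i ≤ v (X q) - ∑ i ∈ X q, q i)
    (p : Fin n → ℝ) (hp : ∀ i, 0 ≤ p i)
    (hnash : ∀ i : Fin n, ∀ q : ℝ, 0 ≤ q →
      (if i ∈ X (Function.update p i q) then q else 0) ≤
      (if i ∈ X p then p i else 0)) :
    (∀ i : Fin n, i ∉ X p → v (insert i (X p)) - v (X p) = 0) ∧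
      v (X p) = v Finset.univ := by
  set S := X p with hS
  have hmarg : ∀ i : Fin n, i ∉ S → v (insert i S) - v S = 0 := by
    intro i hi
    set m := v (insert i S) - v S with hm
    have hm0 : 0 ≤ m := by
      have := hmono S (insert i S) (Finset.subset_insert i S)
      linarith
    by_contra hne
    have hmpos : 0 < m := lt_of_le_of_ne hm0 (fun h => hne h.symm)
    set q : ℝ := m / 2 with hqdef
    have hq0 : 0 ≤ q := by positivity
    set p' : Fin n → ℝ := Function.update p i q with hp'
    have hp'0 : ∀ j, 0 ≤ p' j := by
      intro j
      by_cases hj : j = i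
      · subst hj; simp [hp', hq0]
      · simp [hp', Function.update_of_ne hj, hp j]
    set T := X p' with hT
    have hiT : i ∈ T := by
      by_contra hiT
      have hsumT : ∑ j ∈ T, p' j = ∑ j ∈ T, p j := by
        apply Finset.sum_congr rfl
        intro j hj
        have hji : j ≠ i := by rintro rfl; exact hiT hj
        exact Function.update_of_ne hji q p
      have hsumIns : ∑ j ∈ insert i S, p' j = q + ∑ j ∈ S, p j := by
        rw [Finset.sum_insert hi]
        congr 1
        · simp [hp']
        · apply Finset.sum_congr rfl
          intro j hj
          have hji : j ≠ i := by rintro rfl; exact hi hj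
          exact Function.update_of_ne hji q p
      have h1 := hXd p' hp'0 (insert i S)
      rw [← hT, hsumT, hsumIns] at h1
      have h2 := hXd p hp T
      rw [← hS] at h2
      have : v (insert i S) - q ≤ v S := by linarith
      rw [hqdef] at this
      have : m ≤ m / 2 := by linarith
      linarith
    have := hnash i q hq0
    rw [← hp', ← hT] at this
    simp [hiT, hi, ← hS] at this
    linarith
  refine ⟨hmarg, ?_⟩
  have key : ∀ B : Finset (Fin n), v (S ∪ B) ≤ v S := by
    intro B
    induction B using Finset.induction_on with
    | empty => simp
    | @insert a B ha ih =>
      by_cases haS : a ∈ S ∪ B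
      · have : S ∪ insert a B = S ∪ B := by
          rw [Finset.union_insert, Finset.insert_eq_self.mpr haS]
        rw [this]; exact ih
      · have haS' : a ∉ S := fun h => haS (Finset.mem_union_left _ h)
        have hmz := hmarg a haS'
        have hs := hsub (insert a S) (S ∪ B)
        have hun : insert a S ∪ (S ∪ B) = S ∪ insert a B := by
          rw [Finset.insert_union, ← Finset.union_assoc, Finset.union_self, Finset.union_insert]
        have hin : insert a S ∩ (S ∪ B) = S := by
          ext x
          simp only [Finset.mem_inter, Finset.mem_insert, Finset.mem_union]
          constructor
          · rintro ⟨h1 | h1, h2⟩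
            · subst h1; exact absurd (Finset.mem_union.mpr h2) haS
            · exact h1
          · intro h; exact ⟨Or.inr h, Or.inl h⟩
        rw [hun, hin] at hs
        linarith
  have h1 : v S ≤ v Finset.univ := hmono S Finset.univ (Finset.subset_univ S)
  have h2 : v Finset.univ ≤ v S := by
    have := key Finset.univ
    rwa [Finset.union_eq_right.mpr (Finset.subset_univ S)] at this
  linarith
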